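/- If B ⊆ Σⁿ is (1,1)-guaranteed, then |B| ≥ |Σ|^{n−1}. -/

import Mathlib

namespace Levenshtein

/-- Costs for edit operations (as in the removed Mathlib `Levenshtein.Cost`). -/
structure Cost (α β δ : Type*) where
  delete : α → δ
  insert : β → δ
  substitute : α → β → δ

/-- Unit costs (as in the removed Mathlib `Levenshtein.defaultCost`). -/
def defaultCost {α : Type*} [DecidableEq α] : Cost α α ℕ where
  delete _ := 1
  insert _ := 1
  substitute a b := if a = b then 0 else 1

end Levenshtein

/-- Levenshtein distance, by the recurrences of the removed Mathlib `levenshtein`. -/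
def levenshtein {α β δ : Type*} [AddZeroClass δ] [Min δ] (C : Levenshtein.Cost α β δ) :
    List α → List β → δ
  | [], [] => 0
  | [], y :: ys => C.insert y + levenshtein C [] ys
  | x :: xs, [] => C.delete x + levenshtein C xs []
  | x :: xs, y :: ys =>
    min (C.delete x + levenshtein C xs (y :: ys))
      (min (C.insert y + levenshtein C (x :: xs) ys) (C.substitute x y + levenshtein C xs ys))
termination_by xs ys => xs.length + ys.length

@[simp] theorem Levenshtein.defaultCost_delete {α : Type*} [DecidableEq α] (a : α) :
    (Levenshtein.defaultCost : Levenshtein.Cost α α ℕ).delete a = 1 := rfl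

@[simp] theorem Levenshtein.defaultCost_insert {α : Type*} [DecidableEq α] (a : α) :
    (Levenshtein.defaultCost : Levenshtein.Cost α α ℕ).insert a = 1 := rfl

@[simp] theorem Levenshtein.defaultCost_substitute {α : Type*} [DecidableEq α] (a b : α) :
    (Levenshtein.defaultCost : Levenshtein.Cost α α ℕ).substitute a b = if a = b then 0 else 1 :=
  rfl

@[simp] theorem levenshtein_nil_nil {α β δ : Type*} [AddZeroClass δ] [Min δ]
    (C : Levenshtein.Cost α β δ) : levenshtein C [] [] = 0 := by
  rw [levenshtein.eq_1]

@[simp] theorem levenshtein_nil_cons {α β δ : Type*} [AddZeroClass δ] [Min δ]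
    (C : Levenshtein.Cost α β δ) (y : β) (ys : List β) :
    levenshtein C [] (y :: ys) = C.insert y + levenshtein C [] ys := by
  rw [levenshtein.eq_2]

@[simp] theorem levenshtein_cons_nil {α β δ : Type*} [AddZeroClass δ] [Min δ]
    (C : Levenshtein.Cost α β δ) (x : α) (xs : List α) :
    levenshtein C (x :: xs) [] = C.delete x + levenshtein C xs [] := by
  rw [levenshtein.eq_3]

theorem levenshtein_cons_cons {α β δ : Type*} [AddZeroClass δ] [Min δ]
    (C : Levenshtein.Cost α β δ) (x : α) (xs : List α) (y : β) (ys : List β) :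
    levenshtein C (x :: xs) (y :: ys) =
      min (C.delete x + levenshtein C xs (y :: ys))
        (min (C.insert y + levenshtein C (x :: xs) ys) (C.substitute x y + levenshtein C xs ys)) := by
  rw [levenshtein.eq_4]

/-- Edit (Levenshtein) distance between two length-`n` sequences over `α`. -/
def editDist {α : Type*} [DecidableEq α] {n : ℕ} (s t : Fin n → α) : ℕ :=
  levenshtein Levenshtein.defaultCost (List.ofFn s) (List.ofFn t)

/-- `B` is a `(d, r)`-guaranteed subset of `Σⁿ`: for every pair of sequences within
edit distance `d`, some sequence of `B` lies in both of their `r`-neighborhoods. -/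
def IsGuaranteed {α : Type*} [DecidableEq α] {n : ℕ} (d r : ℕ)
    (B : Set (Fin n → α)) : Prop :=
  ∀ s t : Fin n → α, editDist s t ≤ d →
    ∃ v ∈ B, editDist s v ≤ r ∧ editDist t v ≤ r

section aux

variable {α : Type*} [DecidableEq α]

private lemma lev_self (l : List α) :
    levenshtein Levenshtein.defaultCost l l = 0 := by
  induction l with
  | nil => simp
  | cons x l ih =>
      refine Nat.le_antisymm ?_ (Nat.zero_le _)
      rw [levenshtein_cons_cons]
      refine le_trans (min_le_right _ _) (le_trans (min_le_right _ _) ?_)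
      simp [ih]

private lemma lev_eq_zero : ∀ (l₁ l₂ : List α),
    levenshtein Levenshtein.defaultCost l₁ l₂ = 0 → l₁ = l₂ := by
  intro l₁
  induction l₁ with
  | nil =>
      intro l₂ h
      cases l₂ with
      | nil => rfl
      | cons y ys => simp at h
  | cons x xs ih =>
      intro l₂ h
      cases l₂ with
      | nil => simp at h
      | cons y ys =>
          rw [levenshtein_cons_cons] at h
          rcases Nat.min_eq_zero_iff.mp h with h1 | h2
          · simp at h1
          · rcases Nat.min_eq_zero_iff.mp h2 with h3 | h4
            · simp at h3
            · have hsub : (Levenshtein.defaultCost.substitute x y : ℕ) = 0 ∧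
                  levenshtein Levenshtein.defaultCost xs ys = 0 :=
                Nat.add_eq_zero.mp h4
              have hxy : x = y := by
                by_contra hne
                simp [Levenshtein.defaultCost, hne] at hsub
              rw [hxy, ih ys hsub.2]

private lemma lev_append_single (l : List α) (a b : α) :
    levenshtein Levenshtein.defaultCost (l ++ [a]) (l ++ [b]) ≤ 1 := by
  induction l with
  | nil =>
      simp only [List.nil_append]
      rw [levenshtein_cons_cons]
      refine le_trans (min_le_right _ _) (le_trans (min_le_right _ _) ?_)
      simp [Levenshtein.defaultCost]
      split <;> simp
  | cons x l ih =>
      simp only [List.cons_append]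
      rw [levenshtein_cons_cons]
      refine le_trans (min_le_right _ _) (le_trans (min_le_right _ _) ?_)
      simpa [Levenshtein.defaultCost] using ih

private lemma key : ∀ (u : List α) (v : List α) (a b : α), a ≠ b →
    v.length = u.length + 1 →
    levenshtein Levenshtein.defaultCost (u ++ [a]) v ≤ 1 →
    levenshtein Levenshtein.defaultCost (u ++ [b]) v ≤ 1 →
    ∃ c, v = u ++ [c] := by
  intro u
  induction u with
  | nil =>
      intro v a b _ hlen _ _
      cases v with
      | nil => simp at hlen
      | cons c v' =>
          cases v' with
          | nil => exact ⟨c, rfl⟩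
          | cons d v'' => simp at hlen
  | cons x u' ih =>
      intro v a b hab hlen ha hb
      cases v with
      | nil => simp at hlen
      | cons y v' =>
          have hlen' : v'.length = u'.length + 1 := by
            simpa using hlen
          -- analyze the `a`-side
          rw [List.cons_append, levenshtein_cons_cons] at ha hb
          have hbr : ∀ (z : α), min ((1 : ℕ) +
              levenshtein Levenshtein.defaultCost (u' ++ [z]) (y :: v'))
              (min (1 + levenshtein Levenshtein.defaultCost (x :: (u' ++ [z])) v')
                ((if x = y then 0 else 1) +
                  levenshtein Levenshtein.defaultCost (u' ++ [z]) v')) ≤ 1 →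
              (if x = y then 0 else 1) +
                levenshtein Levenshtein.defaultCost (u' ++ [z]) v' ≤ 1 := by
            intro z h
            rcases min_le_iff.mp h with h1 | h2
            · exfalso
              have h0 : levenshtein Levenshtein.defaultCost (u' ++ [z]) (y :: v') = 0 :=
                by omega
              have := congrArg List.length (lev_eq_zero _ _ h0)
              simp [hlen'] at this
            · rcases min_le_iff.mp h2 with h3 | h4
              · exfalso
                have h0 : levenshtein Levenshtein.defaultCost (x :: (u' ++ [z])) v' = 0 :=
                  by omega
                have := congrArg List.length (lev_eq_zero _ _ h0)
                simp [hlen'] at this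
              · exact h4
          have ha' := hbr a (by simpa [Levenshtein.defaultCost] using ha)
          have hb' := hbr b (by simpa [Levenshtein.defaultCost] using hb)
          by_cases hxy : x = y
          · simp only [if_pos hxy, Nat.zero_add] at ha' hb'
            obtain ⟨c, hc⟩ := ih v' a b hab hlen' ha' hb'
            exact ⟨c, by rw [hc, hxy, List.cons_append]⟩
          · exfalso
            simp only [if_neg hxy] at ha' hb'
            have ha0 : levenshtein Levenshtein.defaultCost (u' ++ [a]) v' = 0 := by omega
            have hb0 : levenshtein Levenshtein.defaultCost (u' ++ [b]) v' = 0 := by omega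
            have := (lev_eq_zero _ _ ha0).trans (lev_eq_zero _ _ hb0).symm
            simp at this
            exact hab this

end aux

theorem stmt16 {α : Type*} [Fintype α] [DecidableEq α] (hα : 1 < Fintype.card α)
    {n : ℕ} (B : Set (Fin n → α)) (hB : IsGuaranteed 1 1 B) :
    Fintype.card α ^ (n - 1) ≤ Set.ncard B := by
  classical
  obtain ⟨a, b, hab⟩ := Fintype.exists_pair_of_one_lt_card hα
  cases n with
  | zero =>
      simp only [Nat.zero_sub, pow_zero]
      obtain ⟨v, hv, -⟩ := hB (fun i => a) (fun i => a) (by simp [editDist, lev_self])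
      have : (0 : ℕ) < Set.ncard B :=
        Set.Nonempty.ncard_pos (Set.toFinite B) ⟨v, hv⟩
      omega
  | succ m =>
      simp only [Nat.succ_sub_one]
      have hofn : ∀ (u : Fin m → α) (c : α),
          List.ofFn (Fin.snoc u c : Fin (m + 1) → α) = List.ofFn u ++ [c] := by
        intro u c
        rw [List.ofFn_succ']
        simp [Fin.snoc, List.concat_eq_append]
      have hdist : ∀ u : Fin m → α,
          editDist (Fin.snoc u a : Fin (m+1) → α) (Fin.snoc u b) ≤ 1 := by
        intro u
        simp only [editDist, hofn]
        exact lev_append_single _ _ _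
      -- choose an element of B near both snoc u a and snoc u b
      have hch : ∀ u : Fin m → α, ∃ v : Fin (m+1) → α, v ∈ B ∧ ∃ c, v = Fin.snoc u c := by
        intro u
        obtain ⟨v, hvB, hva, hvb⟩ := hB _ _ (hdist u)
        refine ⟨v, hvB, ?_⟩
        have hlen : (List.ofFn v).length = (List.ofFn u).length + 1 := by simp
        obtain ⟨c, hc⟩ := key (List.ofFn u) (List.ofFn v) a b hab hlen
          (by rw [← hofn]; exact hva) (by rw [← hofn]; exact hvb)
        refine ⟨c, ?_⟩
        have : List.ofFn v = List.ofFn (Fin.snoc u c : Fin (m+1) → α) := by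
          rw [hofn]; exact hc
        exact List.ofFn_injective this
      choose f hfB c hfc using hch
      have hinj : Function.Injective f := by
        intro u u' h
        have h2 : (Fin.snoc u (c u) : Fin (m+1) → α) = Fin.snoc u' (c u') := by
          rw [← hfc u, ← hfc u', h]
        have := congrArg (fun g : Fin (m+1) → α => Fin.init g) h2
        simpa [Fin.init_snoc] using this
      calc Fintype.card α ^ m = Nat.card (Fin m → α) := by
            simp [Nat.card_eq_fintype_card]
        _ = (Set.univ : Set (Fin m → α)).ncard := (Set.ncard_univ _).symm
        _ = (f '' Set.univ).ncard :=
            (Set.ncard_image_of_injOn (hinj.injOn)).symm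
        _ ≤ Set.ncard B := Set.ncard_le_ncard (by
            rintro v ⟨u, -, rfl⟩
            exact hfB u) (Set.toFinite B)
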